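/- Let (s, θ, ν) be a valid BLESS parameter set in which every latent variable has at least three observed children, i.e., |s^{-1}(k)| ≥ 3 for every k ∈ {1,…,K}. Then the model is strictly identifiable regardless of the dependence among the latent variables: for every valid BLESS parameter set (s̄, θ̄, ν̄) (same K, p, d) whose joint probability mass function agrees with that of (s, θ, ν), there exists a permutation σ of {1,…,K} such that s̄(j) = σ(s(j)) for all j ∈ {1,…,p}, θ̄^{(j)}_{c|x} = θ^{(j)}_{c|x} for all j, c, x, and ν̄_α = ν_{α∘σ} for all α ∈ {0,1}^K, where (α∘σ)_k = α_{σ(k)}. -/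

import Mathlib

open Finset

/-- Joint probability mass function of the observed vector `c : Fin p → Fin d` under the
BLESS model with parent map `s`, conditional probability tables `θ` (where `θ j c x` is
`θ^{(j)}_{c|x}`), and latent proportion vector `ν`. -/
def blessPMF {K p d : ℕ} (s : Fin p → Fin K) (θ : Fin p → Fin d → Bool → ℝ)
    (ν : (Fin K → Bool) → ℝ) (c : Fin p → Fin d) : ℝ :=
  ∑ α : Fin K → Bool, ν α * ∏ j, θ j (c j) (α (s j))

/-- Validity of a BLESS parameter set `(θ, ν)`: all conditional probabilities strictly
between 0 and 1, columns of each conditional probability table summing to one, the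
monotonicity constraint `θ^{(j)}_{c|1} > θ^{(j)}_{c|0}` for every non-last category `c`,
strictly positive proportions summing to one. -/
structure BlessValid {K p d : ℕ} (θ : Fin p → Fin d → Bool → ℝ)
    (ν : (Fin K → Bool) → ℝ) : Prop where
  theta_pos : ∀ j c x, 0 < θ j c x
  theta_lt_one : ∀ j c x, θ j c x < 1
  theta_sum : ∀ j x, ∑ c, θ j c x = 1
  theta_mono : ∀ j (c : Fin d), (c : ℕ) + 1 < d → θ j c false < θ j c true
  nu_pos : ∀ α, 0 < ν α
  nu_sum : ∑ α, ν α = 1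

/-- if every latent variable has at least three observed children, the BLESS
model is strictly identifiable: any valid parameter set giving the same joint distribution
equals the true one up to a permutation of the latent variables. -/

lemma sumprod {ι κ : Type*} [Fintype ι] [DecidableEq ι] [Fintype κ] (H : ι → κ → ℝ) :
    ∑ y : ι → κ, ∏ j, H j (y j) = ∏ j, ∑ c, H j c := by
  rw [Finset.prod_univ_sum]
  rw [Fintype.piFinset_univ]


lemma sum_mul_swap {I X : Type*} [Fintype I] [Fintype X] (f : I → ℝ) (g : X → I → ℝ) :
    ∑ a, f a * ∑ x, g x a = ∑ x, ∑ a, f a * g x a := by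
  simp_rw [Finset.mul_sum]; exact Finset.sum_comm

lemma span_step {X I J : Type*} [Fintype X] [DecidableEq X] [Fintype I] [Fintype J]
    (A B : X → I → ℝ) (KA KB : X → J → ℝ) (u : X → I → ℝ)
    (hdual : ∀ x y, ∑ a, u x a * A y a = if x = y then 1 else 0)
    (hex : ∀ x, ∃ v : J → ℝ, ∀ x', ∑ j, v j * KA x' j = if x = x' then 1 else 0)
    (hT : ∀ (a : I) (j : J), ∑ x, KA x j * A x a = ∑ x, KB x j * B x a) :
    ∀ w a, B w a = ∑ x, (∑ b, u x b * B w b) * A x a := by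
  classical
  set slice : J → (I → ℝ) := fun j a => ∑ x, KA x j * A x a with hslice
  set S : Submodule ℝ (I → ℝ) := Submodule.span ℝ (Set.range slice) with hS
  set V : Submodule ℝ (I → ℝ) := Submodule.span ℝ (Set.range A) with hV
  set V' : Submodule ℝ (I → ℝ) := Submodule.span ℝ (Set.range B) with hV'
  have hSV : S ≤ V := by
    rw [hS, Submodule.span_le]
    rintro _ ⟨j, rfl⟩
    have : slice j = ∑ x, KA x j • A x := by
      funext a; simp [hslice, Finset.sum_apply, smul_eq_mul]
    rw [this]
    exact Submodule.sum_mem _ fun x _ =>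
      Submodule.smul_mem _ _ (Submodule.subset_span ⟨x, rfl⟩)
  have hSV' : S ≤ V' := by
    rw [hS, Submodule.span_le]
    rintro _ ⟨j, rfl⟩
    have : slice j = ∑ x, KB x j • B x := by
      funext a; simp only [hslice, Finset.sum_apply, smul_eq_mul, Pi.smul_apply]
      exact hT a j
    rw [this]
    exact Submodule.sum_mem _ fun x _ =>
      Submodule.smul_mem _ _ (Submodule.subset_span ⟨x, rfl⟩)
  -- linear map D
  set D : (I → ℝ) →ₗ[ℝ] (X → ℝ) :=
    { toFun := fun v x => ∑ a, u x a * v a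
      map_add' := by
        intro v w; funext x
        simp [mul_add, Finset.sum_add_distrib]
      map_smul' := by
        intro c v; funext x
        simp only [Pi.smul_apply, smul_eq_mul, RingHom.id_apply, Finset.mul_sum]
        exact Finset.sum_congr rfl fun a _ => by ring } with hD
  have hDslice : ∀ j, D (slice j) = fun x' => KA x' j := by
    intro j; funext x'
    simp only [hD, LinearMap.coe_mk, AddHom.coe_mk, hslice]
    rw [sum_mul_swap]
    calc ∑ x, ∑ a, u x' a * (KA x j * A x a)
        = ∑ x, KA x j * ∑ a, u x' a * A x a := by
          refine Finset.sum_congr rfl fun x _ => ?_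
          rw [Finset.mul_sum]
          exact Finset.sum_congr rfl fun a _ => by ring
      _ = KA x' j := by
          simp only [hdual]
          simp
  have hmap : Submodule.map D S = ⊤ := by
    rw [eq_top_iff]
    have hb : (⊤ : Submodule ℝ (X → ℝ)) = Submodule.span ℝ (Set.range fun x => (Pi.single x 1 : X → ℝ)) := by
      rw [← (Pi.basisFun ℝ X).span_eq]
      congr 1
      ext f
      simp [Pi.basisFun_apply]
    rw [hb, Submodule.span_le]
    rintro _ ⟨x, rfl⟩
    obtain ⟨v, hv⟩ := hex x
    refine ⟨∑ j, v j • slice j, ?_, ?_⟩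
    · exact Submodule.sum_mem _ fun j _ => Submodule.smul_mem _ _ (Submodule.subset_span ⟨j, rfl⟩)
    · rw [map_sum]
      funext x'
      simp only [map_smul, hDslice, Finset.sum_apply, Pi.smul_apply, smul_eq_mul]
      rw [hv x', Pi.single_apply]
      simp [eq_comm]
  have hfr1 : Fintype.card X ≤ Module.finrank ℝ ↥S := by
    have := Submodule.finrank_map_le D S
    rw [hmap] at this
    rw [finrank_top, Module.finrank_fintype_fun_eq_card] at this
    exact this
  have hfr2 : Module.finrank ℝ ↥V' ≤ Fintype.card X := by
    rw [hV', ← Fintype.range_linearCombination ℝ B]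
    have := LinearMap.finrank_range_le ((Fintype.linearCombination ℝ) B)
    rwa [Module.finrank_fintype_fun_eq_card] at this
  have hSeq : S = V' := Submodule.eq_of_le_of_finrank_le hSV' (le_trans hfr2 hfr1)
  intro w a
  have hBw : B w ∈ V := hSV (hSeq ▸ Submodule.subset_span ⟨w, rfl⟩)
  rw [hV, Submodule.mem_span_range_iff_exists_fun ℝ] at hBw
  obtain ⟨c, hc⟩ := hBw
  have hcoef : ∀ x, (∑ b, u x b * B w b) = c x := by
    intro x
    rw [← hc]
    simp only [Finset.sum_apply, Pi.smul_apply, smul_eq_mul]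
    rw [sum_mul_swap]
    calc ∑ x', ∑ b, u x b * (c x' * A x' b)
        = ∑ x', c x' * ∑ b, u x b * A x' b := by
          refine Finset.sum_congr rfl fun x' _ => ?_
          rw [Finset.mul_sum]; exact Finset.sum_congr rfl fun b _ => by ring
      _ = c x := by simp only [hdual]; simp
  calc B w a = (∑ i, c i • A i) a := by rw [hc]
    _ = ∑ x, c x * A x a := by simp [Finset.sum_apply]
    _ = ∑ x, (∑ b, u x b * B w b) * A x a :=
        Finset.sum_congr rfl fun x _ => by rw [hcoef x]

lemma contract3 {X I1 I2 I3 : Type*} [Fintype X] [Fintype I1] [Fintype I2] [Fintype I3]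
    (w : X → ℝ) (f : X → I1 → ℝ) (g : X → I2 → ℝ) (h : X → I3 → ℝ)
    (ta : I1 → ℝ) (tb : I2 → ℝ) (tc : I3 → ℝ) :
    ∑ a, ∑ b, ∑ c, ta a * tb b * tc c * (∑ x, w x * (f x a * (g x b * h x c)))
    = ∑ x, w x * ((∑ a, ta a * f x a) * ((∑ b, tb b * g x b) * (∑ c, tc c * h x c))) := by
  have swap : ∀ (F : I1 → I2 → I3 → X → ℝ),
      (∑ a, ∑ b, ∑ c, ∑ x, F a b c x) = ∑ x, ∑ a, ∑ b, ∑ c, F a b c x := by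
    intro F
    calc (∑ a, ∑ b, ∑ c, ∑ x, F a b c x)
        = ∑ a, ∑ b, ∑ x, ∑ c, F a b c x :=
          Finset.sum_congr rfl fun a _ => Finset.sum_congr rfl fun b _ => Finset.sum_comm
      _ = ∑ a, ∑ x, ∑ b, ∑ c, F a b c x :=
          Finset.sum_congr rfl fun a _ => Finset.sum_comm
      _ = ∑ x, ∑ a, ∑ b, ∑ c, F a b c x := Finset.sum_comm
  have r3 : ∀ (F : I1 → I2 → I3 → ℝ),
      (∑ a, ∑ b, ∑ c, F a b c) = ∑ c, ∑ b, ∑ a, F a b c := by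
    intro F
    calc (∑ a, ∑ b, ∑ c, F a b c)
        = ∑ b, ∑ a, ∑ c, F a b c := Finset.sum_comm
      _ = ∑ b, ∑ c, ∑ a, F a b c := Finset.sum_congr rfl fun b _ => Finset.sum_comm
      _ = ∑ c, ∑ b, ∑ a, F a b c := Finset.sum_comm
  simp only [Finset.mul_sum, Finset.sum_mul]
  rw [swap]
  refine Finset.sum_congr rfl fun x _ => ?_
  rw [r3]
  exact Finset.sum_congr rfl fun c _ => Finset.sum_congr rfl fun b _ =>
    Finset.sum_congr rfl fun a _ => by ring

lemma contract2 {X I1 I2 : Type*} [Fintype X] [Fintype I1] [Fintype I2]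
    (w : X → ℝ) (f : X → I1 → ℝ) (g : X → I2 → ℝ) (ta : I1 → ℝ) (tb : I2 → ℝ) :
    ∑ a, ∑ b, ta a * tb b * (∑ x, w x * (f x a * g x b))
    = ∑ x, w x * ((∑ a, ta a * f x a) * (∑ b, tb b * g x b)) := by
  have swap : ∀ (F : I1 → I2 → X → ℝ),
      (∑ a, ∑ b, ∑ x, F a b x) = ∑ x, ∑ a, ∑ b, F a b x := by
    intro F
    calc (∑ a, ∑ b, ∑ x, F a b x)
        = ∑ a, ∑ x, ∑ b, F a b x := Finset.sum_congr rfl fun a _ => Finset.sum_comm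
      _ = ∑ x, ∑ a, ∑ b, F a b x := Finset.sum_comm
  simp only [Finset.mul_sum, Finset.sum_mul]
  rw [swap]
  refine Finset.sum_congr rfl fun x _ => ?_
  rw [Finset.sum_comm]
  exact Finset.sum_congr rfl fun b _ => Finset.sum_congr rfl fun a _ => by ring

lemma prodsum2 {I2 I3 : Type*} [Fintype I2] [Fintype I3] (f : I2 → ℝ) (g : I3 → ℝ) :
    ∑ j : I2 × I3, f j.1 * g j.2 = (∑ b, f b) * (∑ c, g c) := by
  rw [Fintype.sum_prod_type, Finset.sum_mul]
  exact Finset.sum_congr rfl fun b _ => by rw [Finset.mul_sum]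

lemma core_unique {X I1 I2 I3 : Type*} [Fintype X] [DecidableEq X]
    [Fintype I1] [Fintype I2] [Fintype I3]
    (A1 : X → I1 → ℝ) (A2 : X → I2 → ℝ) (A3 : X → I3 → ℝ)
    (B1 : X → I1 → ℝ) (B2 : X → I2 → ℝ) (B3 : X → I3 → ℝ)
    (u1 : X → I1 → ℝ) (u2 : X → I2 → ℝ) (u3 : X → I3 → ℝ)
    (lam lam' : X → ℝ)
    (hdu1 : ∀ x y, ∑ a, u1 x a * A1 y a = if x = y then 1 else 0)
    (hdu2 : ∀ x y, ∑ b, u2 x b * A2 y b = if x = y then 1 else 0)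
    (hdu3 : ∀ x y, ∑ c, u3 x c * A3 y c = if x = y then 1 else 0)
    (hA1s : ∀ x, ∑ a, A1 x a = 1) (hA2s : ∀ x, ∑ b, A2 x b = 1) (hA3s : ∀ x, ∑ c, A3 x c = 1)
    (hB1s : ∀ x, ∑ a, B1 x a = 1) (hB2s : ∀ x, ∑ b, B2 x b = 1) (hB3s : ∀ x, ∑ c, B3 x c = 1)
    (hlam : ∀ x, 0 < lam x) (hlam' : ∀ x, 0 < lam' x)
    (hT : ∀ a b c, ∑ x, lam x * (A1 x a * (A2 x b * A3 x c))
                 = ∑ x, lam' x * (B1 x a * (B2 x b * B3 x c))) :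
    ∃ π : Equiv.Perm X, (∀ x, B1 x = A1 (π x)) ∧ (∀ x, B2 x = A2 (π x)) ∧
      (∀ x, B3 x = A3 (π x)) ∧ (∀ x, lam' x = lam (π x)) := by
  classical
  set P : X → X → ℝ := fun x w => ∑ a, u1 x a * B1 w a with hP
  set Q : X → X → ℝ := fun x w => ∑ b, u2 x b * B2 w b with hQ
  set R : X → X → ℝ := fun x w => ∑ c, u3 x c * B3 w c with hR
  -- general contraction identity
  have key : ∀ (ta : I1 → ℝ) (tb : I2 → ℝ) (tc : I3 → ℝ),
      ∑ x, lam x * ((∑ a, ta a * A1 x a) * ((∑ b, tb b * A2 x b) * (∑ c, tc c * A3 x c)))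
    = ∑ x, lam' x * ((∑ a, ta a * B1 x a) * ((∑ b, tb b * B2 x b) * (∑ c, tc c * B3 x c))) := by
    intro ta tb tc
    rw [← contract3, ← contract3]
    exact Finset.sum_congr rfl fun a _ => Finset.sum_congr rfl fun b _ =>
      Finset.sum_congr rfl fun c _ => by rw [hT]
  have one1 : ∀ x, (∑ a, (1:ℝ) * A1 x a) = 1 := fun x => by
    simp only [one_mul]; exact hA1s x
  have one2 : ∀ x, (∑ b, (1:ℝ) * A2 x b) = 1 := fun x => by
    simp only [one_mul]; exact hA2s x
  have one3 : ∀ x, (∑ c, (1:ℝ) * A3 x c) = 1 := fun x => by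
    simp only [one_mul]; exact hA3s x
  have one1' : ∀ x, (∑ a, (1:ℝ) * B1 x a) = 1 := fun x => by
    simp only [one_mul]; exact hB1s x
  have one2' : ∀ x, (∑ b, (1:ℝ) * B2 x b) = 1 := fun x => by
    simp only [one_mul]; exact hB2s x
  have one3' : ∀ x, (∑ c, (1:ℝ) * B3 x c) = 1 := fun x => by
    simp only [one_mul]; exact hB3s x
  -- triple identity
  have hI1 : ∀ x y z, ∑ w, lam' w * (P x w * (Q y w * R z w))
      = if y = x ∧ z = x then lam x else 0 := by
    intro x y z
    rw [← key (u1 x) (u2 y) (u3 z)]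
    simp only [hdu1, hdu2, hdu3]
    rw [Finset.sum_eq_single x]
    · by_cases hyx : y = x <;> by_cases hzx : z = x <;> simp [hyx, hzx]
    · intro w _ hwx
      simp [Ne.symm hwx]
    · simp
  -- pair identities
  have hPQ : ∀ x y, ∑ w, lam' w * (P x w * Q y w) = if y = x then lam x else 0 := by
    intro x y
    have := key (u1 x) (u2 y) (fun _ => 1)
    simp only [hdu1, hdu2, one3, one3', mul_one] at this
    rw [← this]
    rw [Finset.sum_eq_single x]
    · by_cases hyx : y = x <;> simp [hyx]
    · intro w _ hwx; simp [Ne.symm hwx]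
    · simp
  have hPR : ∀ x z, ∑ w, lam' w * (P x w * R z w) = if z = x then lam x else 0 := by
    intro x z
    have := key (u1 x) (fun _ => 1) (u3 z)
    simp only [hdu1, hdu3, one_mul, hA2s, hB2s, mul_one] at this
    rw [← this]
    rw [Finset.sum_eq_single x]
    · by_cases hzx : z = x <;> simp [hzx]
    · intro w _ hwx; simp [Ne.symm hwx]
    · simp
  have hQR : ∀ y z, ∑ w, lam' w * (Q y w * R z w) = if z = y then lam y else 0 := by
    intro y z
    have := key (fun _ => 1) (u2 y) (u3 z)
    simp only [hdu2, hdu3, one_mul, hA1s, hB1s, mul_one] at this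
    rw [← this]
    rw [Finset.sum_eq_single y]
    · by_cases hzy : z = y <;> simp [hzy]
    · intro w _ hwy; simp [Ne.symm hwy]
    · simp
  have hP1 : ∀ x, ∑ w, lam' w * P x w = lam x := by
    intro x
    have := key (u1 x) (fun _ => 1) (fun _ => 1)
    simp only [hdu1, one2, one3, one2', one3', mul_one] at this
    rw [← this]
    rw [Finset.sum_eq_single x]
    · simp
    · intro w _ hwx; simp [Ne.symm hwx]
    · simp
  -- expansions of B columns in terms of A columns
  have hex1 : ∀ x, ∃ v : I2 × I3 → ℝ, ∀ x',
      ∑ j, v j * (lam x' * (A2 x' j.1 * A3 x' j.2)) = if x = x' then 1 else 0 := by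
    intro x
    refine ⟨fun j => (lam x)⁻¹ * (u2 x j.1 * u3 x j.2), fun x' => ?_⟩
    have h : ∑ j : I2 × I3, ((lam x)⁻¹ * (u2 x j.1 * u3 x j.2)) * (lam x' * (A2 x' j.1 * A3 x' j.2))
        = ((lam x)⁻¹ * lam x') * ∑ j : I2 × I3, (u2 x j.1 * A2 x' j.1) * (u3 x j.2 * A3 x' j.2) := by
      rw [Finset.mul_sum]
      exact Finset.sum_congr rfl fun j _ => by ring
    rw [h, prodsum2 (fun b => u2 x b * A2 x' b) (fun c => u3 x c * A3 x' c), hdu2, hdu3]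
    by_cases hxx : x = x'
    · subst hxx; simp only [if_pos rfl, mul_one]
      field_simp
      rw [if_pos trivial, mul_one]
      exact div_self (ne_of_gt (hlam x))
    · simp [hxx]
  have hex2 : ∀ x, ∃ v : I1 × I3 → ℝ, ∀ x',
      ∑ j, v j * (lam x' * (A1 x' j.1 * A3 x' j.2)) = if x = x' then 1 else 0 := by
    intro x
    refine ⟨fun j => (lam x)⁻¹ * (u1 x j.1 * u3 x j.2), fun x' => ?_⟩
    have h : ∑ j : I1 × I3, ((lam x)⁻¹ * (u1 x j.1 * u3 x j.2)) * (lam x' * (A1 x' j.1 * A3 x' j.2))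
        = ((lam x)⁻¹ * lam x') * ∑ j : I1 × I3, (u1 x j.1 * A1 x' j.1) * (u3 x j.2 * A3 x' j.2) := by
      rw [Finset.mul_sum]
      exact Finset.sum_congr rfl fun j _ => by ring
    rw [h, prodsum2 (fun b => u1 x b * A1 x' b) (fun c => u3 x c * A3 x' c), hdu1, hdu3]
    by_cases hxx : x = x'
    · subst hxx; simp only [if_pos rfl, mul_one]
      field_simp
      rw [if_pos trivial, mul_one]
      exact div_self (ne_of_gt (hlam x))
    · simp [hxx]
  have hex3 : ∀ x, ∃ v : I1 × I2 → ℝ, ∀ x',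
      ∑ j, v j * (lam x' * (A1 x' j.1 * A2 x' j.2)) = if x = x' then 1 else 0 := by
    intro x
    refine ⟨fun j => (lam x)⁻¹ * (u1 x j.1 * u2 x j.2), fun x' => ?_⟩
    have h : ∑ j : I1 × I2, ((lam x)⁻¹ * (u1 x j.1 * u2 x j.2)) * (lam x' * (A1 x' j.1 * A2 x' j.2))
        = ((lam x)⁻¹ * lam x') * ∑ j : I1 × I2, (u1 x j.1 * A1 x' j.1) * (u2 x j.2 * A2 x' j.2) := by
      rw [Finset.mul_sum]
      exact Finset.sum_congr rfl fun j _ => by ring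
    rw [h, prodsum2 (fun b => u1 x b * A1 x' b) (fun c => u2 x c * A2 x' c), hdu1, hdu2]
    by_cases hxx : x = x'
    · subst hxx; simp only [if_pos rfl, mul_one]
      field_simp
      rw [if_pos trivial, mul_one]
      exact div_self (ne_of_gt (hlam x))
    · simp [hxx]
  have hTj1 : ∀ (a : I1) (j : I2 × I3),
      ∑ x, (lam x * (A2 x j.1 * A3 x j.2)) * A1 x a
        = ∑ x, (lam' x * (B2 x j.1 * B3 x j.2)) * B1 x a := by
    intro a j
    have h1 : ∑ x, (lam x * (A2 x j.1 * A3 x j.2)) * A1 x a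
        = ∑ x, lam x * (A1 x a * (A2 x j.1 * A3 x j.2)) :=
      Finset.sum_congr rfl fun x _ => by ring
    have h2 : ∑ x, (lam' x * (B2 x j.1 * B3 x j.2)) * B1 x a
        = ∑ x, lam' x * (B1 x a * (B2 x j.1 * B3 x j.2)) :=
      Finset.sum_congr rfl fun x _ => by ring
    rw [h1, h2, hT]
  have hTj2 : ∀ (b : I2) (j : I1 × I3),
      ∑ x, (lam x * (A1 x j.1 * A3 x j.2)) * A2 x b
        = ∑ x, (lam' x * (B1 x j.1 * B3 x j.2)) * B2 x b := by
    intro b j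
    have h1 : ∑ x, (lam x * (A1 x j.1 * A3 x j.2)) * A2 x b
        = ∑ x, lam x * (A1 x j.1 * (A2 x b * A3 x j.2)) :=
      Finset.sum_congr rfl fun x _ => by ring
    have h2 : ∑ x, (lam' x * (B1 x j.1 * B3 x j.2)) * B2 x b
        = ∑ x, lam' x * (B1 x j.1 * (B2 x b * B3 x j.2)) :=
      Finset.sum_congr rfl fun x _ => by ring
    rw [h1, h2, hT]
  have hTj3 : ∀ (c : I3) (j : I1 × I2),
      ∑ x, (lam x * (A1 x j.1 * A2 x j.2)) * A3 x c
        = ∑ x, (lam' x * (B1 x j.1 * B2 x j.2)) * B3 x c := by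
    intro c j
    have h1 : ∑ x, (lam x * (A1 x j.1 * A2 x j.2)) * A3 x c
        = ∑ x, lam x * (A1 x j.1 * (A2 x j.2 * A3 x c)) :=
      Finset.sum_congr rfl fun x _ => by ring
    have h2 : ∑ x, (lam' x * (B1 x j.1 * B2 x j.2)) * B3 x c
        = ∑ x, lam' x * (B1 x j.1 * (B2 x j.2 * B3 x c)) :=
      Finset.sum_congr rfl fun x _ => by ring
    rw [h1, h2, hT]
  have hB1exp : ∀ w a, B1 w a = ∑ x, P x w * A1 x a :=
    span_step A1 B1 (fun x (j : I2 × I3) => lam x * (A2 x j.1 * A3 x j.2))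
      (fun x (j : I2 × I3) => lam' x * (B2 x j.1 * B3 x j.2)) u1 hdu1 hex1 hTj1
  have hB2exp : ∀ w b, B2 w b = ∑ x, Q x w * A2 x b :=
    span_step A2 B2 (fun x (j : I1 × I3) => lam x * (A1 x j.1 * A3 x j.2))
      (fun x (j : I1 × I3) => lam' x * (B1 x j.1 * B3 x j.2)) u2 hdu2 hex2 hTj2
  have hB3exp : ∀ w c, B3 w c = ∑ x, R x w * A3 x c :=
    span_step A3 B3 (fun x (j : I1 × I2) => lam x * (A1 x j.1 * A2 x j.2))
      (fun x (j : I1 × I2) => lam' x * (B1 x j.1 * B2 x j.2)) u3 hdu3 hex3 hTj3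
  -- column sums of P equal one
  have hPcol : ∀ w, ∑ x, P x w = 1 := by
    intro w
    have hcalc : ∑ a, B1 w a = ∑ x, P x w :=
      calc ∑ a, B1 w a = ∑ a, ∑ x, P x w * A1 x a :=
            Finset.sum_congr rfl fun a _ => hB1exp w a
        _ = ∑ x, ∑ a, P x w * A1 x a := Finset.sum_comm
        _ = ∑ x, P x w := Finset.sum_congr rfl fun x _ => by
              rw [← Finset.mul_sum, hA1s, mul_one]
    rw [← hcalc, hB1s w]
  -- matrix manipulations
  set MP : Matrix X X ℝ := Matrix.of P with hMP
  set MQ : Matrix X X ℝ := Matrix.of Q with hMQ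
  set MR : Matrix X X ℝ := Matrix.of R with hMR
  set L : Matrix X X ℝ := Matrix.diagonal lam with hL
  set L' : Matrix X X ℝ := Matrix.diagonal lam' with hL'
  set Linv : Matrix X X ℝ := Matrix.diagonal (fun x => (lam x)⁻¹) with hLinv
  have hMPQ : MP * (L' * MQ.transpose) = L := by
    ext x y
    rw [Matrix.mul_apply]
    have : ∀ w, MP x w * (L' * MQ.transpose) w y = lam' w * (P x w * Q y w) := by
      intro w
      rw [Matrix.diagonal_mul, Matrix.transpose_apply]
      show P x w * (lam' w * Q y w) = _
      ring
    rw [Finset.sum_congr rfl fun w _ => this w, hPQ]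
    rw [hL, Matrix.diagonal_apply]
    by_cases hxy : x = y
    · subst hxy; simp
    · simp [hxy, Ne.symm hxy]
  have hMPR : MP * (L' * MR.transpose) = L := by
    ext x y
    rw [Matrix.mul_apply]
    have : ∀ w, MP x w * (L' * MR.transpose) w y = lam' w * (P x w * R y w) := by
      intro w
      rw [Matrix.diagonal_mul, Matrix.transpose_apply]
      show P x w * (lam' w * R y w) = _
      ring
    rw [Finset.sum_congr rfl fun w _ => this w, hPR]
    rw [hL, Matrix.diagonal_apply]
    by_cases hxy : x = y
    · subst hxy; simp
    · simp [hxy, Ne.symm hxy]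
  have hMQR : MQ * (L' * MR.transpose) = L := by
    ext x y
    rw [Matrix.mul_apply]
    have : ∀ w, MQ x w * (L' * MR.transpose) w y = lam' w * (Q x w * R y w) := by
      intro w
      rw [Matrix.diagonal_mul, Matrix.transpose_apply]
      show Q x w * (lam' w * R y w) = _
      ring
    rw [Finset.sum_congr rfl fun w _ => this w, hQR]
    rw [hL, Matrix.diagonal_apply]
    by_cases hxy : x = y
    · subst hxy; simp
    · simp [hxy, Ne.symm hxy]
  have hLLinv : L * Linv = 1 := by
    rw [hL, hLinv, Matrix.diagonal_mul_diagonal]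
    have : (fun x => lam x * (lam x)⁻¹) = fun _ => (1:ℝ) := by
      funext x; exact mul_inv_cancel₀ (ne_of_gt (hlam x))
    rw [this, Matrix.diagonal_one]
  have hPright : MP * ((L' * MQ.transpose) * Linv) = 1 := by
    rw [← Matrix.mul_assoc, hMPQ, hLLinv]
  have hPleft : ((L' * MQ.transpose) * Linv) * MP = 1 := mul_eq_one_comm.mp hPright
  -- Q = R
  have hQRmat : MQ = MR := by
    have h0 : MP * (L' * MQ.transpose) = MP * (L' * MR.transpose) := by rw [hMPQ, hMPR]
    have e : ∀ (M : Matrix X X ℝ), (L' * MQ.transpose * Linv) * (MP * M) = M := by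
      intro M
      rw [← Matrix.mul_assoc, hPleft, Matrix.one_mul]
    have h1 : L' * MQ.transpose = L' * MR.transpose := by
      have := congrArg (fun Z => (L' * MQ.transpose * Linv) * Z) h0
      simpa only [e] using this
    have h2 : ∀ w y, lam' w * MQ.transpose w y = lam' w * MR.transpose w y := by
      intro w y
      have h3 := congrArg (fun M => M w y) h1
      simp only [hL'] at h3
      rw [Matrix.diagonal_mul, Matrix.diagonal_mul] at h3
      exact h3
    ext x w
    have := h2 w x
    rw [Matrix.transpose_apply, Matrix.transpose_apply] at this
    exact mul_left_cancel₀ (ne_of_gt (hlam' w)) this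
  -- P = Q
  have hPQmat : MP = MQ := by
    have hQ1 : MQ * (L' * MQ.transpose) = L := by rw [← hQRmat] at hMQR; exact hMQR
    have hinv : (L' * MQ.transpose) * (Linv * MP) = 1 := by
      rw [← Matrix.mul_assoc]; exact hPleft
    calc MP = MP * (L' * MQ.transpose * (Linv * MP)) := by rw [hinv, Matrix.mul_one]
      _ = MP * (L' * MQ.transpose) * (Linv * MP) :=
          (Matrix.mul_assoc MP (L' * MQ.transpose) (Linv * MP)).symm
      _ = L * (Linv * MP) := by rw [hMPQ]
      _ = MQ * (L' * MQ.transpose) * (Linv * MP) := by rw [hQ1]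
      _ = MQ * (L' * MQ.transpose * (Linv * MP)) :=
          Matrix.mul_assoc MQ (L' * MQ.transpose) (Linv * MP)
      _ = MQ := by rw [hinv, Matrix.mul_one]
  have hQeqP : ∀ x w, Q x w = P x w := by
    intro x w
    have := congrArg (fun M => M x w) hPQmat
    exact this.symm
  have hReqP : ∀ x w, R x w = P x w := by
    intro x w
    have h := congrArg (fun M => M x w) hQRmat
    exact h.symm.trans (hQeqP x w)
  -- rewrite identities with P only
  have hI1P : ∀ x y z, ∑ w, lam' w * (P x w * (P y w * P z w))
      = if y = x ∧ z = x then lam x else 0 := by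
    intro x y z
    rw [← hI1 x y z]
    exact Finset.sum_congr rfl fun w _ => by rw [hQeqP, hReqP]
  have hPP : ∀ x y, ∑ w, lam' w * (P x w * P y w) = if y = x then lam x else 0 := by
    intro x y
    rw [← hPQ x y]
    exact Finset.sum_congr rfl fun w _ => by rw [hQeqP]
  set G : Matrix X X ℝ := L' * MQ.transpose * Linv with hG
  have hGP : ∀ w w', ∑ x, G w x * P x w' = if w = w' then 1 else 0 := by
    intro w w'
    have h := congrArg (fun M => M w w') hPleft
    rw [Matrix.mul_apply, Matrix.one_apply] at h
    exact h
  -- key square identity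
  have hsq : ∀ w z, lam' w * P z w = lam z * (G w z * G w z) := by
    intro w z
    have hc := contract2 (fun w' => lam' w' * P z w') (fun w' x => P x w')
      (fun w' x => P x w') (fun x => G w x) (fun x => G w x)
    have hlhs : ∑ x, ∑ y, G w x * G w y * (∑ w', (lam' w' * P z w') * (P x w' * P y w'))
        = lam z * (G w z * G w z) := by
      have hinner : ∀ x y, (∑ w', (lam' w' * P z w') * (P x w' * P y w'))
          = if y = x ∧ z = x then lam x else 0 := by
        intro x y
        rw [← hI1P x y z]
        exact Finset.sum_congr rfl fun w' _ => by ring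
      calc ∑ x, ∑ y, G w x * G w y * (∑ w', (lam' w' * P z w') * (P x w' * P y w'))
          = ∑ x, ∑ y, G w x * G w y * (if y = x ∧ z = x then lam x else 0) := by
            exact Finset.sum_congr rfl fun x _ => Finset.sum_congr rfl fun y _ => by
              rw [hinner]
        _ = ∑ x, G w x * G w x * (if z = x then lam x else 0) := by
            refine Finset.sum_congr rfl fun x _ => ?_
            rw [Finset.sum_eq_single x]
            · by_cases hzx : z = x <;> simp [hzx]
            · intro y _ hyx; simp [hyx]
            · simp
        _ = lam z * (G w z * G w z) := by
            rw [Finset.sum_eq_single z]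
            · simp; ring
            · intro x _ hxz; simp [Ne.symm hxz]
            · simp
    have hrhs : ∑ w', (lam' w' * P z w') * ((∑ x, G w x * P x w') * (∑ y, G w y * P y w'))
        = lam' w * P z w := by
      rw [Finset.sum_eq_single w]
      · rw [hGP w w]; simp
      · intro w' _ hww'
        rw [hGP w w']
        simp [Ne.symm hww']
      · simp
    rw [hc, hrhs] at hlhs
    exact hlhs.symm ▸ hlhs
  -- nonnegativity of P entries
  have hPnn : ∀ z w, 0 ≤ P z w := by
    intro z w
    have h := hsq w z
    have h0 : 0 ≤ lam' w * P z w := by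
      rw [h]
      exact mul_nonneg (hlam z).le (mul_self_nonneg _)
    nlinarith [hlam' w]
  -- disjoint supports
  have hdisj : ∀ x y, x ≠ y → ∀ w, P x w * P y w = 0 := by
    intro x y hxy w
    have hsum : ∑ w', lam' w' * (P x w' * P y w') = 0 := by
      rw [hPP x y, if_neg (fun h => hxy h.symm)]
    have hnn : ∀ w' ∈ Finset.univ, 0 ≤ lam' w' * (P x w' * P y w') := fun w' _ =>
      mul_nonneg (hlam' w').le (mul_nonneg (hPnn x w') (hPnn y w'))
    have := (Finset.sum_eq_zero_iff_of_nonneg hnn).mp hsum w (Finset.mem_univ w)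
    have hl := ne_of_gt (hlam' w)
    exact (mul_eq_zero.mp this).resolve_left hl
  -- extract permutation
  have hcol : ∀ w, ∃ x, P x w = 1 ∧ ∀ y, y ≠ x → P y w = 0 := by
    intro w
    have hne : ∑ x, P x w ≠ 0 := by rw [hPcol w]; exact one_ne_zero
    obtain ⟨x0, _, hx0⟩ := Finset.exists_ne_zero_of_sum_ne_zero hne
    have hz : ∀ y, y ≠ x0 → P y w = 0 := by
      intro y hy
      have := hdisj x0 y (Ne.symm hy) w
      exact (mul_eq_zero.mp this).resolve_left hx0
    have h1 : P x0 w = 1 := by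
      have := hPcol w
      rw [Finset.sum_eq_single x0 (fun y _ hy => hz y hy) (by simp)] at this
      exact this
    exact ⟨x0, h1, hz⟩
  choose π0 hπ1 hπ0 using hcol
  have hsurj : Function.Surjective π0 := by
    intro x
    by_contra hne
    push_neg at hne
    have hzero : ∀ w, P x w = 0 := fun w => hπ0 w x (Ne.symm (hne w))
    have := hP1 x
    simp only [hzero, mul_zero, Finset.sum_const_zero] at this
    exact absurd this.symm (ne_of_gt (hlam x))
  have hbij : Function.Bijective π0 := Finite.surjective_iff_bijective.mp hsurj
  have hinj : Function.Injective π0 := hbij.1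
  have hlamfin : ∀ w, lam' w = lam (π0 w) := by
    intro w
    have h := hPP (π0 w) (π0 w)
    rw [if_pos rfl] at h
    rw [Finset.sum_eq_single w] at h
    · rw [hπ1 w] at h; simpa using h
    · intro w' _ hw'
      have : P (π0 w) w' = 0 := hπ0 w' (π0 w) (fun hcon => hw' (hinj hcon).symm)
      rw [this]; ring
    · simp
  have hB1fin : ∀ w, B1 w = A1 (π0 w) := by
    intro w
    funext a
    rw [hB1exp w a, Finset.sum_eq_single (π0 w)]
    · rw [hπ1 w, one_mul]
    · intro x _ hx
      rw [hπ0 w x hx, zero_mul]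
    · simp
  have hB2fin : ∀ w, B2 w = A2 (π0 w) := by
    intro w
    funext b
    rw [hB2exp w b]
    rw [Finset.sum_congr rfl fun x _ => by rw [hQeqP]]
    rw [Finset.sum_eq_single (π0 w)]
    · rw [hπ1 w, one_mul]
    · intro x _ hx
      rw [hπ0 w x hx, zero_mul]
    · simp
  have hB3fin : ∀ w, B3 w = A3 (π0 w) := by
    intro w
    funext c
    rw [hB3exp w c]
    rw [Finset.sum_congr rfl fun x _ => by rw [hReqP]]
    rw [Finset.sum_eq_single (π0 w)]
    · rw [hπ1 w, one_mul]
    · intro x _ hx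
      rw [hπ0 w x hx, zero_mul]
    · simp
  exact ⟨Equiv.ofBijective π0 hbij, hB1fin, hB2fin, hB3fin, hlamfin⟩

lemma pairing {p d : ℕ} (F G : Fin p → Fin d → ℝ) :
    ∑ y : Fin p → Fin d, (∏ j, F j (y j)) * (∏ j, G j (y j)) = ∏ j, ∑ c, F j c * G j c := by
  rw [Finset.sum_congr rfl fun y _ => (Finset.prod_mul_distrib).symm]
  exact sumprod (fun j c => F j c * G j c)

lemma dual_pair {d : ℕ} (hd : 2 ≤ d) (v : Fin d → Bool → ℝ)
    (hsum : ∀ x, ∑ c, v c x = 1)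
    (hmono : v ⟨0, by omega⟩ false < v ⟨0, by omega⟩ true) :
    ∃ w : Bool → Fin d → ℝ, ∀ b x, ∑ c, w b c * v c x = if b = x then 1 else 0 := by
  set c0 : Fin d := ⟨0, by omega⟩ with hc0
  set D := v c0 true - v c0 false with hD
  have hDpos : 0 < D := sub_pos.mpr hmono
  have hDne : D ≠ 0 := ne_of_gt hDpos
  have hbase : ∀ x', ∑ c, ((if c = c0 then (1:ℝ) else 0) - v c0 false) / D * v c x'
      = (v c0 x' - v c0 false) / D := by
    intro x'
    have hterm : ∀ c, ((if c = c0 then (1:ℝ) else 0) - v c0 false) / D * v c x'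
        = ((if c = c0 then (1:ℝ) else 0) * v c x') / D - (v c0 false * v c x') / D := by
      intro c; ring
    rw [Finset.sum_congr rfl fun c _ => hterm c, Finset.sum_sub_distrib,
      ← Finset.sum_div, ← Finset.sum_div]
    have h1 : ∑ c, (if c = c0 then (1:ℝ) else 0) * v c x' = v c0 x' := by
      rw [Finset.sum_eq_single c0]
      · simp
      · intro c _ hc; simp [hc]
      · simp
    have h2 : ∑ c, v c0 false * v c x' = v c0 false := by
      rw [← Finset.mul_sum, hsum, mul_one]
    rw [h1, h2]
    ring
  refine ⟨fun b c => if b then ((if c = c0 then 1 else 0) - v c0 false) / D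
                     else 1 - ((if c = c0 then 1 else 0) - v c0 false) / D, ?_⟩
  intro b x
  cases b
  · -- b = false
    simp only [Bool.false_eq_true, if_false]
    have hterm : ∀ c, (1 - ((if c = c0 then (1:ℝ) else 0) - v c0 false) / D) * v c x
        = v c x - ((if c = c0 then (1:ℝ) else 0) - v c0 false) / D * v c x := by
      intro c; ring
    rw [Finset.sum_congr rfl fun c _ => hterm c, Finset.sum_sub_distrib, hsum, hbase]
    cases x
    · simp
    · rw [← hD]
      field_simp
      simp
  · -- b = true
    simp only [if_true]
    rw [hbase]
    cases x
    · simp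
    · rw [← hD]
      field_simp
      simp

/-- model factor for one group of observed variables, with dummy `1/d` factors elsewhere -/
noncomputable def groupFun {K p d : ℕ} (s : Fin p → Fin K) (θ : Fin p → Fin d → Bool → ℝ)
    (g : Fin p → Fin 3) (i : Fin 3) (α : Fin K → Bool) (y : Fin p → Fin d) : ℝ :=
  ∏ j, (if g j = i then θ j (y j) (α (s j)) else (d:ℝ)⁻¹)

/-- dual functional for a group -/
noncomputable def dualFun {K p d : ℕ} (s : Fin p → Fin K) (wd : Fin p → Bool → Fin d → ℝ)
    (Dsel : Fin 3 → Fin K → Fin p) (i : Fin 3) (α : Fin K → Bool) (y : Fin p → Fin d) : ℝ :=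
  ∏ j, (if j = Dsel i (s j) then wd j (α (s j)) (y j) else 1)

lemma groupFun_sum {K p d : ℕ} (hd0 : 0 < d) (s : Fin p → Fin K)
    (θ : Fin p → Fin d → Bool → ℝ) (g : Fin p → Fin 3)
    (hsum : ∀ j x, ∑ c, θ j c x = 1) (i : Fin 3) (α : Fin K → Bool) :
    ∑ y, groupFun s θ g i α y = 1 := by
  unfold groupFun
  rw [sumprod (fun j c => if g j = i then θ j c (α (s j)) else (d:ℝ)⁻¹)]
  apply Finset.prod_eq_one
  intro j _
  by_cases hj : g j = i
  · simp only [hj, if_pos rfl]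
    exact hsum j _
  · simp only [if_neg hj, Finset.sum_const, Finset.card_univ, Fintype.card_fin, nsmul_eq_mul]
    field_simp

lemma dualFun_pairing {K p d : ℕ} (hd0 : 0 < d) (s : Fin p → Fin K)
    (θ : Fin p → Fin d → Bool → ℝ) (g : Fin p → Fin 3)
    (wd : Fin p → Bool → Fin d → ℝ) (Dsel : Fin 3 → Fin K → Fin p)
    (hsum : ∀ j x, ∑ c, θ j c x = 1)
    (hwd : ∀ j b x, ∑ c, wd j b c * θ j c x = if b = x then 1 else 0)
    (hDs : ∀ i k, s (Dsel i k) = k) (hgD : ∀ i k, g (Dsel i k) = i)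
    (hDinj : ∀ i, Function.Injective (Dsel i))
    (i : Fin 3) (α β : Fin K → Bool) :
    ∑ y, dualFun s wd Dsel i α y * groupFun s θ g i β y = if α = β then 1 else 0 := by
  classical
  unfold dualFun groupFun
  rw [pairing (fun j c => if j = Dsel i (s j) then wd j (α (s j)) c else 1)
      (fun j c => if g j = i then θ j c (β (s j)) else (d:ℝ)⁻¹)]
  have hper : ∀ j : Fin p,
      (∑ c, (if j = Dsel i (s j) then wd j (α (s j)) c else 1)
        * (if g j = i then θ j c (β (s j)) else (d:ℝ)⁻¹))
      = if j = Dsel i (s j) then (if α (s j) = β (s j) then 1 else 0) else 1 := by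
    intro j
    by_cases hj : j = Dsel i (s j)
    · have hgj : g j = i := by rw [hj, hgD]
      simp only [if_pos hj, hgj, if_pos rfl]
      exact hwd j (α (s j)) (β (s j))
    · rw [if_neg hj]
      by_cases hgj : g j = i
      · simp only [if_neg hj, if_pos hgj, one_mul]
        exact hsum j _
      · simp only [if_neg hj, if_neg hgj, one_mul, Finset.sum_const, Finset.card_univ,
          Fintype.card_fin, nsmul_eq_mul]
        field_simp
  rw [Finset.prod_congr rfl fun j _ => hper j]
  rw [← Finset.prod_filter]
  have hfilter : Finset.univ.filter (fun j => j = Dsel i (s j)) = Finset.univ.image (Dsel i) := by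
    ext j
    simp only [Finset.mem_filter, Finset.mem_univ, true_and, Finset.mem_image]
    constructor
    · intro hj; exact ⟨s j, hj.symm⟩
    · rintro ⟨k, rfl⟩
      rw [hDs]
  rw [hfilter, Finset.prod_image (fun k _ k' _ h => hDinj i h)]
  have : ∀ k, (if α (s (Dsel i k)) = β (s (Dsel i k)) then (1:ℝ) else 0)
      = if α k = β k then 1 else 0 := by intro k; rw [hDs]
  rw [Finset.prod_congr rfl fun k _ => this k]
  by_cases hab : α = β
  · subst hab; simp
  · rw [if_neg hab]
    obtain ⟨k, hk⟩ := Function.ne_iff.mp hab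
    exact Finset.prod_eq_zero (Finset.mem_univ k) (if_neg hk)

lemma groupFun_extract {K p d : ℕ} (hd0 : 0 < d) (s : Fin p → Fin K)
    (θ : Fin p → Fin d → Bool → ℝ) (g : Fin p → Fin 3)
    (hsum : ∀ j x, ∑ c, θ j c x = 1)
    (i : Fin 3) (j : Fin p) (hj : g j = i) (c : Fin d) (α : Fin K → Bool) :
    ∑ y, (∏ j', if j' = j then (if y j' = c then (1:ℝ) else 0) else 1)
      * groupFun s θ g i α y = θ j c (α (s j)) := by
  classical
  unfold groupFun
  rw [pairing (fun j' cc => if j' = j then (if cc = c then (1:ℝ) else 0) else 1)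
      (fun j' cc => if g j' = i then θ j' cc (α (s j')) else (d:ℝ)⁻¹)]
  have hper : ∀ j' : Fin p,
      (∑ cc, (if j' = j then (if cc = c then (1:ℝ) else 0) else 1)
        * (if g j' = i then θ j' cc (α (s j')) else (d:ℝ)⁻¹))
      = if j' = j then θ j c (α (s j)) else 1 := by
    intro j'
    by_cases hjj : j' = j
    · subst hjj
      simp only [if_pos rfl, hj]
      rw [Finset.sum_eq_single c]
      · simp
      · intro cc _ hcc; simp [hcc]
      · simp
    · rw [if_neg hjj]
      by_cases hgj : g j' = i
      · simp only [if_neg hjj, if_pos hgj, one_mul]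
        exact hsum j' _
      · simp only [if_neg hjj, if_neg hgj, one_mul, Finset.sum_const, Finset.card_univ,
          Fintype.card_fin, nsmul_eq_mul]
        field_simp
  rw [Finset.prod_congr rfl fun j' _ => hper j']
  rw [Finset.prod_eq_single j]
  · simp
  · intro j' _ hjj; rw [if_neg hjj]
  · simp

lemma groupFun_factor {K p d : ℕ} (s : Fin p → Fin K)
    (θ : Fin p → Fin d → Bool → ℝ) (g : Fin p → Fin 3)
    (a b c : Fin p → Fin d) (α : Fin K → Bool) :
    groupFun s θ g 0 α a * (groupFun s θ g 1 α b * groupFun s θ g 2 α c)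
    = ((d:ℝ)⁻¹ ^ 2) ^ p
      * ∏ j, θ j (if g j = 0 then a j else if g j = 1 then b j else c j) (α (s j)) := by
  classical
  unfold groupFun
  rw [← Finset.prod_mul_distrib, ← Finset.prod_mul_distrib]
  have hconst : ((d:ℝ)⁻¹ ^ 2) ^ p = ∏ _j : Fin p, (d:ℝ)⁻¹ ^ 2 := by
    rw [Finset.prod_const, Finset.card_univ, Fintype.card_fin]
  rw [hconst, ← Finset.prod_mul_distrib]
  refine Finset.prod_congr rfl fun j _ => ?_
  have hfin3 : ∀ i : Fin 3, i = 0 ∨ i = 1 ∨ i = 2 := by decide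
  rcases hfin3 (g j) with h | h | h <;> rw [h] <;> simp <;> ring

theorem bless_three_children_strictly_identifiable {K p d : ℕ} (hd : 2 ≤ d)
    (s sb : Fin p → Fin K)
    (θ θb : Fin p → Fin d → Bool → ℝ) (ν νb : (Fin K → Bool) → ℝ)
    (h1 : BlessValid θ ν) (h2 : BlessValid θb νb)
    (heq : ∀ c, blessPMF s θ ν c = blessPMF sb θb νb c)
    (hchild : ∀ k, 3 ≤ (Finset.univ.filter (fun j => s j = k)).card) :
    ∃ σ : Equiv.Perm (Fin K),
      (∀ j, sb j = σ (s j)) ∧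
      (∀ j c x, θb j c x = θ j c x) ∧
      (∀ α : Fin K → Bool, νb α = ν (fun i => α (σ i))) := by
  classical
  -- three distinct children for every latent
  have hch : ∀ k, ∃ j0, ∃ j1, ∃ j2 : Fin p, s j0 = k ∧ s j1 = k ∧ s j2 = k ∧
      j0 ≠ j1 ∧ j0 ≠ j2 ∧ j1 ≠ j2 := by
    intro k
    have h3 : 2 < (Finset.univ.filter (fun j => s j = k)).card := by
      have := hchild k; omega
    obtain ⟨a, b, c, ha, hb, hc, hab, hac, hbc⟩ := Finset.two_lt_card_iff.mp h3
    rw [Finset.mem_filter] at ha hb hc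
    exact ⟨a, b, c, ha.2, hb.2, hc.2, hab, hac, hbc⟩
  choose e0 e1 e2 hs0 hs1 hs2 h01 h02 h12 using hch
  set g : Fin p → Fin 3 := fun j => if j = e1 (s j) then 1 else if j = e2 (s j) then 2 else 0
    with hg
  set Dsel : Fin 3 → Fin K → Fin p := fun i k => if i = 1 then e1 k else if i = 2 then e2 k
    else e0 k with hDsel
  have hfin3 : ∀ i : Fin 3, i = 0 ∨ i = 1 ∨ i = 2 := by decide
  have hDs : ∀ i k, s (Dsel i k) = k := by
    intro i k
    rcases hfin3 i with h | h | h <;> subst h <;> simp [hDsel, hs0, hs1, hs2]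
  have hgD : ∀ i k, g (Dsel i k) = i := by
    intro i k
    rcases hfin3 i with h | h | h <;> subst h
    · have hD0 : Dsel 0 k = e0 k := by simp [hDsel]
      rw [hD0]
      simp only [hg, hs0]
      rw [if_neg (h01 k), if_neg (h02 k)]
    · have hD1 : Dsel 1 k = e1 k := by simp [hDsel]
      rw [hD1]
      simp only [hg, hs1]
      simp
    · have hD2 : Dsel 2 k = e2 k := by simp [hDsel]
      rw [hD2]
      simp only [hg, hs2]
      rw [if_neg (Ne.symm (h12 k))]
      simp
  have hDinj : ∀ i, Function.Injective (Dsel i) := by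
    intro i k k' hkk'
    rw [← hDs i k, hkk', hDs]
  have hd0 : 0 < d := by omega
  -- dual pairs for model 1
  have hc0nat : (0:ℕ) + 1 < d := by omega
  have hdw : ∀ j : Fin p, ∃ w : Bool → Fin d → ℝ,
      ∀ b x, ∑ c, w b c * θ j c x = if b = x then 1 else 0 := by
    intro j
    exact dual_pair hd (fun c x => θ j c x) (h1.theta_sum j)
      (h1.theta_mono j ⟨0, by omega⟩ hc0nat)
  choose wd hwd using hdw
  -- hypotheses of the core uniqueness lemma
  have hAs : ∀ i (α : Fin K → Bool), ∑ y, groupFun s θ g i α y = 1 :=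
    groupFun_sum hd0 s θ g h1.theta_sum
  have hBs : ∀ i (α : Fin K → Bool), ∑ y, groupFun sb θb g i α y = 1 :=
    groupFun_sum hd0 sb θb g h2.theta_sum
  have hdual : ∀ i (α β : Fin K → Bool),
      ∑ y, dualFun s wd Dsel i α y * groupFun s θ g i β y = if α = β then 1 else 0 :=
    dualFun_pairing hd0 s θ g wd Dsel h1.theta_sum hwd hDs hgD hDinj
  -- tensor equality
  have hT : ∀ a b c : Fin p → Fin d,
      ∑ α : Fin K → Bool,
        ν α * (groupFun s θ g 0 α a * (groupFun s θ g 1 α b * groupFun s θ g 2 α c))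
      = ∑ α : Fin K → Bool,
        νb α * (groupFun sb θb g 0 α a * (groupFun sb θb g 1 α b * groupFun sb θb g 2 α c)) := by
    intro a b c
    have hm := heq (fun j => if g j = 0 then a j else if g j = 1 then b j else c j)
    calc ∑ α : Fin K → Bool,
          ν α * (groupFun s θ g 0 α a * (groupFun s θ g 1 α b * groupFun s θ g 2 α c))
        = ((d:ℝ)⁻¹ ^ 2) ^ p * blessPMF s θ ν
            (fun j => if g j = 0 then a j else if g j = 1 then b j else c j) := by
          rw [blessPMF, Finset.mul_sum]
          refine Finset.sum_congr rfl fun α _ => ?_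
          rw [groupFun_factor]
          ring
      _ = ((d:ℝ)⁻¹ ^ 2) ^ p * blessPMF sb θb νb
            (fun j => if g j = 0 then a j else if g j = 1 then b j else c j) := by rw [hm]
      _ = ∑ α : Fin K → Bool,
          νb α * (groupFun sb θb g 0 α a * (groupFun sb θb g 1 α b * groupFun sb θb g 2 α c)) := by
          rw [blessPMF, Finset.mul_sum]
          refine (Finset.sum_congr rfl fun α _ => ?_).symm
          rw [groupFun_factor]
          ring
  obtain ⟨π, hG0, hG1, hG2, hνfin⟩ := core_unique (X := Fin K → Bool)
    (groupFun s θ g 0) (groupFun s θ g 1) (groupFun s θ g 2)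
    (groupFun sb θb g 0) (groupFun sb θb g 1) (groupFun sb θb g 2)
    (dualFun s wd Dsel 0) (dualFun s wd Dsel 1) (dualFun s wd Dsel 2)
    ν νb (hdual 0) (hdual 1) (hdual 2) (hAs 0) (hAs 1) (hAs 2) (hBs 0) (hBs 1) (hBs 2)
    h1.nu_pos h2.nu_pos hT
  have hgroup : ∀ (j : Fin p) (α : Fin K → Bool),
      groupFun sb θb g (g j) α = groupFun s θ g (g j) (π α) := by
    intro j α
    rcases hfin3 (g j) with h | h | h <;> rw [h]
    exacts [hG0 α, hG1 α, hG2 α]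
  -- extraction of individual conditional probabilities
  have hE : ∀ (j : Fin p) (c : Fin d) (α : Fin K → Bool),
      θb j c (α (sb j)) = θ j c ((π α) (s j)) := by
    intro j c α
    have hL := groupFun_extract hd0 sb θb g h2.theta_sum (g j) j rfl c α
    have hR := groupFun_extract hd0 s θ g h1.theta_sum (g j) j rfl c (π α)
    calc θb j c (α (sb j))
        = ∑ y, (∏ j', if j' = j then (if y j' = c then (1:ℝ) else 0) else 1)
            * groupFun sb θb g (g j) α y := hL.symm
      _ = ∑ y, (∏ j', if j' = j then (if y j' = c then (1:ℝ) else 0) else 1)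
            * groupFun s θ g (g j) (π α) y := by rw [hgroup j α]
      _ = θ j c ((π α) (s j)) := hR
  have hmono1 : ∀ j : Fin p, θ j ⟨0, hd0⟩ false < θ j ⟨0, hd0⟩ true :=
    fun j => h1.theta_mono j ⟨0, hd0⟩ hc0nat
  have hmono2 : ∀ j : Fin p, θb j ⟨0, hd0⟩ false < θb j ⟨0, hd0⟩ true :=
    fun j => h2.theta_mono j ⟨0, hd0⟩ hc0nat
  have hmain : ∀ j : Fin p, (∀ c x, θb j c x = θ j c x) ∧
      (∀ α : Fin K → Bool, (π α) (s j) = α (sb j)) := by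
    intro j
    have hEψ : ∀ (c : Fin d) (x : Bool), θb j c x = θ j c ((π (fun _ => x)) (s j)) :=
      fun c x => hE j c (fun _ => x)
    have hψid : (π (fun _ => false)) (s j) = false ∧ (π (fun _ => true)) (s j) = true := by
      have hlt : θ j ⟨0, hd0⟩ ((π (fun _ => false)) (s j))
          < θ j ⟨0, hd0⟩ ((π (fun _ => true)) (s j)) := by
        rw [← hEψ ⟨0, hd0⟩ false, ← hEψ ⟨0, hd0⟩ true]
        exact hmono2 j
      cases hf : (π (fun _ => false)) (s j) <;> cases ht : (π (fun _ => true)) (s j) <;>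
        rw [hf, ht] at hlt
      · exact absurd hlt (lt_irrefl _)
      · exact ⟨rfl, rfl⟩
      · exact absurd (lt_trans hlt (hmono1 j)) (lt_irrefl _)
      · exact absurd hlt (lt_irrefl _)
    have hθeq : ∀ c x, θb j c x = θ j c x := by
      intro c x
      rw [hEψ c x]
      cases x
      · rw [hψid.1]
      · rw [hψid.2]
    refine ⟨hθeq, fun α => ?_⟩
    have h := hE j ⟨0, hd0⟩ α
    rw [hθeq ⟨0, hd0⟩ (α (sb j))] at h
    by_contra hne
    cases hx : α (sb j) <;> cases hy : (π α) (s j) <;> rw [hx, hy] at h hne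
    · exact hne rfl
    · exact absurd h (ne_of_lt (hmono1 j))
    · exact absurd h.symm (ne_of_lt (hmono1 j))
    · exact hne rfl
  -- construct the permutation of latent variables
  have hsbc : ∀ j : Fin p, sb j = sb (e0 (s j)) := by
    intro j
    have hall : ∀ α : Fin K → Bool, α (sb j) = α (sb (e0 (s j))) := by
      intro α
      have h1' := (hmain j).2 α
      have h2' := (hmain (e0 (s j))).2 α
      rw [hs0] at h2'
      rw [← h1', h2']
    have := hall (fun i => decide (i = sb j))
    simp only [decide_eq_true_eq] at this
    have h' : (decide (sb (e0 (s j)) = sb j)) = true := by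
      rw [← this]; simp
    exact (of_decide_eq_true h').symm
  have hπσ : ∀ (α : Fin K → Bool) (k : Fin K), (π α) k = α (sb (e0 k)) := by
    intro α k
    have := (hmain (e0 k)).2 α
    rwa [hs0] at this
  have hinjσ : Function.Injective (fun k => sb (e0 k)) := by
    intro k k' hkk
    simp only at hkk
    have hall : ∀ β : Fin K → Bool, β k = β k' := by
      intro β
      obtain ⟨α, rfl⟩ := π.surjective β
      rw [hπσ α k, hπσ α k', hkk]
    have := hall (fun i => decide (i = k))
    simp only [decide_eq_true_eq] at this
    have h' : (decide (k' = k)) = true := by rw [← this]; simp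
    exact (of_decide_eq_true h').symm
  refine ⟨Equiv.ofBijective (fun k => sb (e0 k)) (Finite.injective_iff_bijective.mp hinjσ),
    ?_, ?_, ?_⟩
  · intro j
    exact hsbc j
  · intro j c x
    exact (hmain j).1 c x
  · intro α
    rw [hνfin α]
    congr 1
    funext k
    exact hπσ α k
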